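/- The function g(β) = β B(β, 1/2) / 2^{2β−1} − 1 is monotonically decreasing in β on (0,1], satisfies g(1) = 0, and takes values in (0,1) for β ∈ (0,1); in particular, for every β ∈ (0,1) there is a unique θ*(β) ∈ (0,1) with (1 − θ*(β))^{−2} · g(β) = 1. -/

import Mathlib

open Real

/-- The Euler Beta function `B(x,y) = Γ(x)Γ(y)/Γ(x+y)`. -/
noncomputable def eulerBeta (x y : ℝ) : ℝ :=
  Real.Gamma x * Real.Gamma y / Real.Gamma (x + y)

/-- The coefficient `g(β) = β B(β,1/2) / 2^{2β−1} − 1` appearing in the variance of the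
fractional Poisson process. -/
noncomputable def gBeta (β : ℝ) : ℝ :=
  β * eulerBeta β (1 / 2) / (2 : ℝ) ^ (2 * β - 1) - 1

open Set MeasureTheory


noncomputable def rB (x y : ℝ) : ℝ := ∫ t in (0:ℝ)..1, t ^ (x-1) * (1-t) ^ (y-1)

lemma gamma_mul_eq {x y : ℝ} (hx : 0 < x) (hy : 0 < y) :
    Real.Gamma x * Real.Gamma y = Real.Gamma (x+y) * rB x y := by
  have hc : Complex.Gamma x * Complex.Gamma y
      = Complex.Gamma (x+y) * Complex.betaIntegral x y := by
    have := Complex.Gamma_mul_Gamma_eq_betaIntegral (s := x) (t := y)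
      (by simpa using hx) (by simpa using hy)
    simpa using this
  have hbeta : Complex.betaIntegral x y = (rB x y : ℂ) := by
    rw [Complex.betaIntegral, rB]
    rw [show ∫ t in (0:ℝ)..1, (t:ℂ) ^ ((x:ℂ) - 1) * (1 - (t:ℂ)) ^ ((y:ℂ) - 1)
        = ∫ t in (0:ℝ)..1, ((t ^ (x-1) * (1-t) ^ (y-1) : ℝ) : ℂ) from ?_]
    · exact intervalIntegral.integral_ofReal
    · refine intervalIntegral.integral_congr fun t ht => ?_
      rw [Set.uIcc_of_le (by norm_num : (0:ℝ) ≤ 1)] at ht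
      push_cast
      rw [Complex.ofReal_cpow ht.1 (x-1), Complex.ofReal_cpow (by linarith [ht.2]) (y-1)]
      push_cast
      ring
  rw [hbeta, ← Complex.ofReal_add, Complex.Gamma_ofReal, Complex.Gamma_ofReal, Complex.Gamma_ofReal] at hc
  exact_mod_cast hc


lemma cont_rpow {c : ℝ} (hc : 0 ≤ c) : Continuous fun t : ℝ => t ^ c :=
  continuous_iff_continuousAt.2 fun t => Real.continuousAt_rpow_const t c (Or.inr hc)

lemma cont_integrand {c d : ℝ} (hc : 0 ≤ c) (hd : 0 ≤ d) :
    Continuous fun t : ℝ => t ^ c * (1-t) ^ d :=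
  (cont_rpow hc).mul ((cont_rpow hd).comp (continuous_const.sub continuous_id))

-- pointwise AM-GM for the integrands
lemma pointwise_amgm {x y t : ℝ} (hx : 1 ≤ x) (hxy : x < y) (ht0 : 0 ≤ t) (ht1 : t ≤ 1) :
    2 * (t ^ ((x+y)/2 - 1) * (1-t) ^ ((x+y)/2 - 1))
      ≤ t ^ (x-1) * (1-t) ^ (y-1) + t ^ (y-1) * (1-t) ^ (x-1) := by
  set a := t ^ (x-1) * (1-t) ^ (y-1) with ha
  set b := t ^ (y-1) * (1-t) ^ (x-1) with hb
  set g := t ^ ((x+y)/2 - 1) * (1-t) ^ ((x+y)/2 - 1) with hg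
  have ht1' : 0 ≤ 1 - t := by linarith
  have ha0 : 0 ≤ a := mul_nonneg (Real.rpow_nonneg ht0 _) (Real.rpow_nonneg ht1' _)
  have hb0 : 0 ≤ b := mul_nonneg (Real.rpow_nonneg ht0 _) (Real.rpow_nonneg ht1' _)
  have hg0 : 0 ≤ g := mul_nonneg (Real.rpow_nonneg ht0 _) (Real.rpow_nonneg ht1' _)
  have hsum : (x-1) + (y-1) ≠ 0 := by linarith
  have hgg : g * g = a * b := by
    rw [ha, hb, hg]
    have h1 : t ^ ((x-1) + (y-1)) = t ^ (x-1) * t ^ (y-1) := Real.rpow_add' ht0 hsum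
    have h2 : (1-t) ^ ((x-1) + (y-1)) = (1-t) ^ (x-1) * (1-t) ^ (y-1) :=
      Real.rpow_add' ht1' hsum
    have h3 : t ^ (((x+y)/2 - 1) + ((x+y)/2 - 1)) = t ^ ((x+y)/2-1) * t ^ ((x+y)/2-1) :=
      Real.rpow_add' ht0 (by rw [show ((x+y)/2 - 1 : ℝ) + ((x+y)/2 - 1) = (x-1)+(y-1) by ring]; exact hsum)
    have h4 : (1-t) ^ (((x+y)/2 - 1) + ((x+y)/2 - 1)) = (1-t) ^ ((x+y)/2-1) * (1-t) ^ ((x+y)/2-1) :=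
      Real.rpow_add' ht1' (by rw [show ((x+y)/2 - 1 : ℝ) + ((x+y)/2 - 1) = (x-1)+(y-1) by ring]; exact hsum)
    rw [show ((x+y)/2 - 1 : ℝ) + ((x+y)/2 - 1) = (x-1)+(y-1) by ring] at h3 h4
    calc (t ^ ((x+y)/2-1) * (1-t) ^ ((x+y)/2-1)) * (t ^ ((x+y)/2-1) * (1-t) ^ ((x+y)/2-1))
        = (t ^ ((x+y)/2-1) * t ^ ((x+y)/2-1)) * ((1-t) ^ ((x+y)/2-1) * (1-t) ^ ((x+y)/2-1)) := by ring
      _ = t ^ ((x-1)+(y-1)) * (1-t) ^ ((x-1)+(y-1)) := by rw [← h3, ← h4]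
      _ = (t ^ (x-1) * (1-t) ^ (y-1)) * (t ^ (y-1) * (1-t) ^ (x-1)) := by rw [h1, h2]; ring
  have hgab : g = Real.sqrt a * Real.sqrt b := by
    have h5 := Real.sqrt_mul_self hg0
    rw [hgg, Real.sqrt_mul ha0] at h5
    exact h5.symm
  nlinarith [sq_nonneg (Real.sqrt a - Real.sqrt b), Real.sq_sqrt ha0, Real.sq_sqrt hb0]

lemma pointwise_amgm_strict {x y : ℝ} (hx : 1 ≤ x) (hxy : x < y) :
    2 * ((1/8 : ℝ) ^ ((x+y)/2 - 1) * (1-(1/8:ℝ)) ^ ((x+y)/2 - 1))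
      < (1/8:ℝ) ^ (x-1) * (1-(1/8:ℝ)) ^ (y-1) + (1/8:ℝ) ^ (y-1) * (1-(1/8:ℝ)) ^ (x-1) := by
  have h78 : (1 - (1/8:ℝ)) = 7/8 := by norm_num
  rw [h78]
  set t : ℝ := 1/8
  set u : ℝ := 7/8
  have ht0 : (0:ℝ) < t := by norm_num
  have hu0 : (0:ℝ) < u := by norm_num
  set a := t ^ (x-1) * u ^ (y-1) with ha
  set b := t ^ (y-1) * u ^ (x-1) with hb
  set g := t ^ ((x+y)/2 - 1) * u ^ ((x+y)/2 - 1) with hg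
  have ha0 : 0 ≤ a := mul_nonneg (Real.rpow_nonneg ht0.le _) (Real.rpow_nonneg hu0.le _)
  have hb0 : 0 ≤ b := mul_nonneg (Real.rpow_nonneg ht0.le _) (Real.rpow_nonneg hu0.le _)
  have hgg : g * g = a * b := by
    rw [ha, hb, hg]
    calc (t ^ ((x+y)/2-1) * u ^ ((x+y)/2-1)) * (t ^ ((x+y)/2-1) * u ^ ((x+y)/2-1))
        = (t ^ ((x+y)/2-1) * t ^ ((x+y)/2-1)) * (u ^ ((x+y)/2-1) * u ^ ((x+y)/2-1)) := by ring
      _ = t ^ (((x+y)/2-1) + ((x+y)/2-1)) * u ^ (((x+y)/2-1) + ((x+y)/2-1)) := by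
          rw [← Real.rpow_add ht0, ← Real.rpow_add hu0]
      _ = t ^ ((x-1) + (y-1)) * u ^ ((x-1) + (y-1)) := by ring_nf
      _ = (t ^ (x-1) * t ^ (y-1)) * (u ^ (x-1) * u ^ (y-1)) := by
          rw [Real.rpow_add ht0, Real.rpow_add hu0]
      _ = t ^ (x-1) * u ^ (y-1) * (t ^ (y-1) * u ^ (x-1)) := by ring
  have hba : b < a := by
    have h1 : t ^ (y-1) = t ^ (x-1) * t ^ (y-x) := by
      rw [← Real.rpow_add ht0]; ring_nf
    have h2 : u ^ (y-1) = u ^ (x-1) * u ^ (y-x) := by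
      rw [← Real.rpow_add hu0]; ring_nf
    have h3 : t ^ (y-x) < u ^ (y-x) :=
      Real.rpow_lt_rpow ht0.le (by norm_num) (by linarith)
    rw [ha, hb, h1, h2]
    have htx : 0 < t ^ (x-1) := Real.rpow_pos_of_pos ht0 _
    have hux : 0 < u ^ (x-1) := Real.rpow_pos_of_pos hu0 _
    calc t ^ (x-1) * t ^ (y-x) * u ^ (x-1) < t ^ (x-1) * u ^ (y-x) * u ^ (x-1) := by
          apply mul_lt_mul_of_pos_right (mul_lt_mul_of_pos_left h3 htx) hux
      _ = t ^ (x-1) * (u ^ (x-1) * u ^ (y-x)) := by ring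
  have hgab : g = Real.sqrt a * Real.sqrt b := by
    have hg0 : 0 ≤ g := mul_nonneg (Real.rpow_nonneg ht0.le _) (Real.rpow_nonneg hu0.le _)
    have h5 := Real.sqrt_mul_self hg0
    rw [hgg, Real.sqrt_mul ha0] at h5
    exact h5.symm
  have hsq : Real.sqrt b < Real.sqrt a := Real.sqrt_lt_sqrt hb0 hba
  nlinarith [sq_nonneg (Real.sqrt a - Real.sqrt b), Real.sq_sqrt ha0, Real.sq_sqrt hb0]

lemma gamma_midpoint_lt {x y : ℝ} (hx : 1 ≤ x) (hxy : x < y) :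
    Real.Gamma ((x+y)/2) ^ 2 < Real.Gamma x * Real.Gamma y := by
  have hx0 : (0:ℝ) < x := by linarith
  have hy0 : (0:ℝ) < y := by linarith
  have hm0 : (0:ℝ) < (x+y)/2 := by linarith
  have hx1 : (0:ℝ) ≤ x - 1 := by linarith
  have hy1 : (0:ℝ) ≤ y - 1 := by linarith
  have hm1 : (0:ℝ) ≤ (x+y)/2 - 1 := by linarith
  -- key integral inequality
  have key : rB ((x+y)/2) ((x+y)/2) < rB x y := by
    have hsym : rB x y = rB y x := by
      have h1 := gamma_mul_eq hx0 hy0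
      have h2 := gamma_mul_eq hy0 hx0
      rw [add_comm y x] at h2
      have hG : (0:ℝ) < Real.Gamma (x+y) := Real.Gamma_pos_of_pos (by linarith)
      have h3 : Real.Gamma (x+y) * rB x y = Real.Gamma (x+y) * rB y x := by
        rw [← h1, mul_comm (Real.Gamma x), h2]
      exact mul_left_cancel₀ hG.ne' h3
    have hint : (∫ t in (0:ℝ)..1, 2 * (t ^ ((x+y)/2-1) * (1-t) ^ ((x+y)/2-1)))
        < ∫ t in (0:ℝ)..1, (t ^ (x-1) * (1-t) ^ (y-1) + t ^ (y-1) * (1-t) ^ (x-1)) := by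
      apply intervalIntegral.integral_lt_integral_of_continuousOn_of_le_of_exists_lt
        (by norm_num)
      · exact (continuous_const.mul (cont_integrand hm1 hm1)).continuousOn
      · exact ((cont_integrand hx1 hy1).add (cont_integrand hy1 hx1)).continuousOn
      · intro t ht
        exact pointwise_amgm hx hxy (le_of_lt ht.1) ht.2
      · exact ⟨1/8, by norm_num, pointwise_amgm_strict hx hxy⟩
    rw [intervalIntegral.integral_const_mul, intervalIntegral.integral_add
      ((cont_integrand hx1 hy1).intervalIntegrable _ _)
      ((cont_integrand hy1 hx1).intervalIntegrable _ _)] at hint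
    have : (2:ℝ) * rB ((x+y)/2) ((x+y)/2) < rB x y + rB y x := hint
    rw [← hsym] at this
    linarith
  have hGsum : (0:ℝ) < Real.Gamma (x+y) := Real.Gamma_pos_of_pos (by linarith)
  have e1 : Real.Gamma ((x+y)/2) ^ 2 = Real.Gamma (x+y) * rB ((x+y)/2) ((x+y)/2) := by
    have := gamma_mul_eq hm0 hm0
    rw [show (x+y)/2 + (x+y)/2 = x + y by ring] at this
    rw [sq]; exact this
  rw [e1, gamma_mul_eq hx0 hy0]
  exact mul_lt_mul_of_pos_left key hGsum

local notation "L" => (Real.log ∘ Real.Gamma)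

lemma logGamma_slope {x1 x2 y1 y2 : ℝ} (h0 : 0 < x1) (h12 : x1 < x2) (hxy1 : x1 ≤ y1)
    (hxy2 : x2 ≤ y2) (h34 : y1 < y2) (hlen : x2 - x1 = y2 - y1) :
    L x2 - L x1 ≤ L y2 - L y1 := by
  have hx1 : x1 ∈ Set.Ioi (0:ℝ) := h0
  have hx2 : x2 ∈ Set.Ioi (0:ℝ) := by simp only [Set.mem_Ioi]; linarith
  have hy1 : y1 ∈ Set.Ioi (0:ℝ) := by simp only [Set.mem_Ioi]; linarith
  have hy2 : y2 ∈ Set.Ioi (0:ℝ) := by simp only [Set.mem_Ioi]; linarith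
  have cv := Real.convexOn_log_Gamma
  have s1 : (L x2 - L x1) / (x2 - x1) ≤ (L y2 - L x1) / (y2 - x1) :=
    cv.secant_mono hx1 hx2 hy2 (by linarith) (by linarith) hxy2
  have s2 : (L x1 - L y2) / (x1 - y2) ≤ (L y1 - L y2) / (y1 - y2) :=
    cv.secant_mono hy2 hx1 hy1 (by linarith) (by linarith) hxy1
  have e1 : (L x1 - L y2) / (x1 - y2) = (L y2 - L x1) / (y2 - x1) := by
    rw [← neg_div_neg_eq]; ring_nf
  have e2 : (L y1 - L y2) / (y1 - y2) = (L y2 - L y1) / (y2 - y1) := by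
    rw [← neg_div_neg_eq]; ring_nf
  rw [e1, e2] at s2
  have hd1 : (0:ℝ) < x2 - x1 := by linarith
  have hd2 : (0:ℝ) < y2 - y1 := by linarith
  have := s1.trans s2
  rw [hlen] at this
  calc L x2 - L x1 = ((L x2 - L x1) / (y2 - y1)) * (y2 - y1) := by field_simp
    _ ≤ ((L y2 - L y1) / (y2 - y1)) * (y2 - y1) := by
        apply mul_le_mul_of_nonneg_right this hd2.le
    _ = L y2 - L y1 := by field_simp

lemma gamma_key_lt {a b : ℝ} (ha : 0 < a) (hab : a < b) :
    Real.Gamma (1+b) ^ 2 * Real.Gamma (1+2*a) < Real.Gamma (1+a) ^ 2 * Real.Gamma (1+2*b) := by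
  have p1a : (0:ℝ) < Real.Gamma (1+a) := Real.Gamma_pos_of_pos (by linarith)
  have p1b : (0:ℝ) < Real.Gamma (1+b) := Real.Gamma_pos_of_pos (by linarith)
  have p2a : (0:ℝ) < Real.Gamma (1+2*a) := Real.Gamma_pos_of_pos (by linarith)
  have p2b : (0:ℝ) < Real.Gamma (1+2*b) := Real.Gamma_pos_of_pos (by linarith)
  have pm : (0:ℝ) < Real.Gamma (1+a+b) := Real.Gamma_pos_of_pos (by linarith)
  -- strict midpoint: Γ(1+a+b)² < Γ(1+2a)Γ(1+2b)
  have hmid : Real.Gamma (1+a+b) ^ 2 < Real.Gamma (1+2*a) * Real.Gamma (1+2*b) := by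
    have := gamma_midpoint_lt (x := 1+2*a) (y := 1+2*b) (by linarith) (by linarith)
    rw [show ((1+2*a) + (1+2*b))/2 = 1+a+b by ring] at this
    exact this
  -- slope: L(1+a+b) - L(1+2a) ≥ L(1+b) - L(1+a)
  have hslope : L (1+b) - L (1+a) ≤ L (1+a+b) - L (1+2*a) :=
    logGamma_slope (by linarith) (by linarith) (by linarith) (by linarith) (by linarith)
      (by ring)
  -- convert to products: Γ(1+2a)Γ(1+b) ≤ Γ(1+a+b)Γ(1+a)
  have hprod : Real.Gamma (1+2*a) * Real.Gamma (1+b) ≤ Real.Gamma (1+a+b) * Real.Gamma (1+a) := by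
    have h1 : Real.log (Real.Gamma (1+2*a) * Real.Gamma (1+b))
        ≤ Real.log (Real.Gamma (1+a+b) * Real.Gamma (1+a)) := by
      rw [Real.log_mul p2a.ne' p1b.ne', Real.log_mul pm.ne' p1a.ne']
      have h0 := hslope
      simp only [Function.comp] at h0
      linarith
    calc Real.Gamma (1+2*a) * Real.Gamma (1+b)
        = Real.exp (Real.log (Real.Gamma (1+2*a) * Real.Gamma (1+b))) :=
          (Real.exp_log (by positivity)).symm
      _ ≤ Real.exp (Real.log (Real.Gamma (1+a+b) * Real.Gamma (1+a))) := Real.exp_le_exp.2 h1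
      _ = Real.Gamma (1+a+b) * Real.Gamma (1+a) := Real.exp_log (by positivity)
  have h1 := mul_self_le_mul_self (mul_pos p2a p1b).le hprod
  have h2 := mul_lt_mul_of_pos_right hmid (mul_pos p1a p1a)
  nlinarith [h1, h2, p2a, sq_nonneg (Real.Gamma (1+a+b))]

lemma gBeta_eq {β : ℝ} (hβ : 0 < β) :
    gBeta β = 2 * Real.Gamma (1+β) ^ 2 / Real.Gamma (1+2*β) - 1 := by
  have hA : (0:ℝ) < Real.Gamma β := Real.Gamma_pos_of_pos hβ
  have hC : (0:ℝ) < Real.Gamma (β + 1/2) := Real.Gamma_pos_of_pos (by linarith)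
  have hD : (0:ℝ) < Real.Gamma (2*β) := Real.Gamma_pos_of_pos (by linarith)
  have hP : (0:ℝ) < Real.sqrt π := Real.sqrt_pos.2 Real.pi_pos
  have hp2 : (0:ℝ) < (2:ℝ) ^ (2*β - 1) := Real.rpow_pos_of_pos (by norm_num) _
  have hp2' : (0:ℝ) < (2:ℝ) ^ (1 - 2*β) := Real.rpow_pos_of_pos (by norm_num) _
  have hdup : Real.Gamma β * Real.Gamma (β + 1/2)
      = Real.Gamma (2*β) * (2:ℝ) ^ (1 - 2*β) * Real.sqrt π := Real.Gamma_mul_Gamma_add_half β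
  have hpp : (2:ℝ) ^ (2*β - 1) * (2:ℝ) ^ (1 - 2*β) = 1 := by
    rw [← Real.rpow_add (by norm_num : (0:ℝ) < 2)]
    norm_num
  have hG1 : Real.Gamma (1+β) = β * Real.Gamma β := by
    rw [add_comm]; exact Real.Gamma_add_one hβ.ne'
  have hG2 : Real.Gamma (1+2*β) = 2*β * Real.Gamma (2*β) := by
    rw [add_comm]; exact Real.Gamma_add_one (by positivity)
  rw [gBeta, eulerBeta, Real.Gamma_one_half_eq, hG1, hG2]
  rw [show β + 1/2 = β + 1/2 by rfl]
  have key : β * (Real.Gamma β * Real.sqrt π / Real.Gamma (β + 1/2)) / (2:ℝ) ^ (2*β-1)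
      = 2 * (β * Real.Gamma β) ^ 2 / (2*β * Real.Gamma (2*β)) := by
    have hCval : Real.Gamma (β + 1/2)
        = Real.Gamma (2*β) * (2:ℝ)^(1-2*β) * Real.sqrt π / Real.Gamma β := by
      rw [eq_div_iff hA.ne', mul_comm]
      exact hdup
    rw [hCval]
    rw [show (1:ℝ) - 2*β = -(2*β-1) by ring, Real.rpow_neg (by norm_num : (0:ℝ) ≤ 2)]
    field_simp
  rw [key]

/-- `g(β) = β B(β,1/2)/2^{2β−1} − 1` is strictly decreasing on `(0,1]`,
`g(1) = 0`, `g(β) ∈ (0,1)` for `β ∈ (0,1)`, and for every `β ∈ (0,1)` there is a unique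
`θ*(β) ∈ (0,1)` with `(1 − θ*(β))⁻² · g(β) = 1`. -/
theorem gBeta_properties :
    StrictAntiOn gBeta (Set.Ioc (0 : ℝ) 1) ∧
    gBeta 1 = 0 ∧
    (∀ β ∈ Set.Ioo (0 : ℝ) 1, gBeta β ∈ Set.Ioo (0 : ℝ) 1) ∧
    (∀ β ∈ Set.Ioo (0 : ℝ) 1,
      ∃! θ : ℝ, θ ∈ Set.Ioo (0 : ℝ) 1 ∧ ((1 - θ) ^ 2)⁻¹ * gBeta β = 1) := by
  have hanti : StrictAntiOn gBeta (Set.Ioc (0 : ℝ) 1) := by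
    intro a ha b hb hab
    rw [gBeta_eq ha.1, gBeta_eq hb.1]
    have p1a : (0:ℝ) < Real.Gamma (1+a) := Real.Gamma_pos_of_pos (by linarith [ha.1])
    have p1b : (0:ℝ) < Real.Gamma (1+b) := Real.Gamma_pos_of_pos (by linarith [hb.1])
    have p2a : (0:ℝ) < Real.Gamma (1+2*a) := Real.Gamma_pos_of_pos (by linarith [ha.1])
    have p2b : (0:ℝ) < Real.Gamma (1+2*b) := Real.Gamma_pos_of_pos (by linarith [hb.1])
    have key := gamma_key_lt ha.1 hab
    have : 2 * Real.Gamma (1+b) ^ 2 / Real.Gamma (1+2*b)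
        < 2 * Real.Gamma (1+a) ^ 2 / Real.Gamma (1+2*a) := by
      rw [div_lt_div_iff₀ p2b p2a]
      nlinarith [key]
    linarith
  have hone : gBeta 1 = 0 := by
    have h3 : Real.Gamma 3 = 2 := by
      rw [show (3:ℝ) = (2:ℕ) + 1 by norm_num, Real.Gamma_nat_eq_factorial]
      norm_num
    have := gBeta_eq (one_pos)
    rw [this, show (1:ℝ)+1 = 2 by norm_num, show (1:ℝ)+2*1 = 3 by norm_num,
      Real.Gamma_two, h3]
    norm_num
  have hmem : ∀ β ∈ Set.Ioo (0 : ℝ) 1, gBeta β ∈ Set.Ioo (0 : ℝ) 1 := by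
    intro β hβ
    constructor
    · have := hanti ⟨hβ.1, hβ.2.le⟩ ⟨one_pos, le_refl 1⟩ hβ.2
      rw [hone] at this
      exact this
    · rw [gBeta_eq hβ.1]
      have p2b : (0:ℝ) < Real.Gamma (1+2*β) := Real.Gamma_pos_of_pos (by linarith [hβ.1])
      have key : Real.Gamma (1+β) ^ 2 < Real.Gamma (1+2*β) := by
        have := gamma_midpoint_lt (x := 1) (y := 1+2*β) (le_refl 1) (by linarith [hβ.1])
        rw [show ((1:ℝ) + (1+2*β))/2 = 1+β by ring, Real.Gamma_one, one_mul] at this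
        exact this
      have : 2 * Real.Gamma (1+β) ^ 2 / Real.Gamma (1+2*β) < 2 := by
        rw [div_lt_iff₀ p2b]
        nlinarith [key]
      linarith
  refine ⟨hanti, hone, hmem, ?_⟩
  intro β hβ
  obtain ⟨hg0, hg1⟩ := hmem β hβ
  set g := gBeta β with hgdef
  have hsg0 : 0 < Real.sqrt g := Real.sqrt_pos.2 hg0
  have hsg1 : Real.sqrt g < 1 := by
    have := Real.sqrt_lt_sqrt hg0.le hg1
    simpa using this
  refine ⟨1 - Real.sqrt g, ⟨⟨by linarith, by linarith⟩, ?_⟩, ?_⟩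
  · rw [show (1 - (1 - Real.sqrt g)) = Real.sqrt g by ring, Real.sq_sqrt hg0.le]
    exact inv_mul_cancel₀ hg0.ne'
  · rintro θ ⟨⟨hθ0, hθ1⟩, hθeq⟩
    have h1θ : 0 < 1 - θ := by linarith
    have hsq : (1 - θ) ^ 2 = g := by
      have hne : ((1 - θ) ^ 2 : ℝ) ≠ 0 := by positivity
      field_simp at hθeq
      linarith
    have : Real.sqrt g = 1 - θ := by
      rw [← hsq, Real.sqrt_sq h1θ.le]
    linarith
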